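/- The function t ↦ √(1-t²)/arccos(t) is concave on (-1,1). -/

import Mathlib

open Real Set

private lemma hd_g1 (y : ℝ) : HasDerivAt (fun y => Real.sin y - y * Real.cos y) (y * Real.sin y) y := by
  have h := (Real.hasDerivAt_sin y).sub ((hasDerivAt_id y).mul (Real.hasDerivAt_cos y))
  refine h.congr_deriv ?_
  symm
  simp only [id_eq]; ring

private lemma g1_nonneg : ∀ y ∈ Icc (0:ℝ) π, 0 ≤ Real.sin y - y * Real.cos y := by
  intro y hy
  have hmono : MonotoneOn (fun y => Real.sin y - y * Real.cos y) (Icc (0:ℝ) π) := by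
    apply monotoneOn_of_deriv_nonneg (convex_Icc _ _)
    · exact (Real.continuous_sin.sub (continuous_id.mul Real.continuous_cos)).continuousOn
    · intro x hx; exact (hd_g1 x).differentiableAt.differentiableWithinAt
    · intro x hx
      rw [interior_Icc] at hx
      rw [(hd_g1 x).deriv]
      exact mul_nonneg hx.1.le (Real.sin_nonneg_of_nonneg_of_le_pi hx.1.le hx.2.le)
  have h0 : (0:ℝ) ∈ Icc (0:ℝ) π := ⟨le_refl _, Real.pi_pos.le⟩
  have := hmono h0 hy hy.1
  simpa using this

noncomputable def N1 (y : ℝ) : ℝ := 2*y - 3 * Real.sin y * Real.cos y + y * (Real.cos y ^ 2 - Real.sin y ^ 2)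

private lemma hd_N1 (y : ℝ) : HasDerivAt N1 (4 * Real.sin y * (Real.sin y - y * Real.cos y)) y := by
  have h1 : HasDerivAt (fun y : ℝ => 2*y) 2 y := by
    simpa using (hasDerivAt_id y).const_mul (2:ℝ)
  have h2 : HasDerivAt (fun y : ℝ => 3 * Real.sin y * Real.cos y)
      (3 * Real.cos y * Real.cos y + 3 * Real.sin y * (-Real.sin y)) y :=
    (((Real.hasDerivAt_sin y).const_mul 3).mul (Real.hasDerivAt_cos y))
  have h3 : HasDerivAt (fun y : ℝ => Real.cos y ^ 2 - Real.sin y ^ 2)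
      ((2 * Real.cos y ^ 1 * (-Real.sin y)) - (2 * Real.sin y ^ 1 * Real.cos y)) y :=
    ((Real.hasDerivAt_cos y).pow 2).sub ((Real.hasDerivAt_sin y).pow 2)
  have h4 := (hasDerivAt_id y).mul h3
  have h := (h1.sub h2).add h4
  refine h.congr_deriv ?_
  symm
  simp only [id_eq]
  linear_combination 2 * (Real.sin_sq_add_cos_sq y)

private lemma hd_N (y : ℝ) :
    HasDerivAt (fun y => y^2 + y * Real.sin y * Real.cos y - 2 * Real.sin y ^ 2) (N1 y) y := by
  have h1 : HasDerivAt (fun y : ℝ => y ^ 2) (2 * y ^ 1 * 1) y := (hasDerivAt_id y).pow 2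
  have h2 := (((hasDerivAt_id y).mul (Real.hasDerivAt_sin y)).mul (Real.hasDerivAt_cos y))
  have h3 := ((Real.hasDerivAt_sin y).pow 2).const_mul 2
  have h := (h1.add h2).sub h3
  refine h.congr_deriv ?_
  symm
  unfold N1
  simp only [id_eq, Pi.mul_apply]
  push_cast
  ring

private lemma N1_nonneg : ∀ y ∈ Icc (0:ℝ) π, 0 ≤ N1 y := by
  intro y hy
  have hmono : MonotoneOn N1 (Icc (0:ℝ) π) := by
    apply monotoneOn_of_deriv_nonneg (convex_Icc _ _)
    · exact fun x _ => (hd_N1 x).continuousAt.continuousWithinAt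
    · intro x hx; exact (hd_N1 x).differentiableAt.differentiableWithinAt
    · intro x hx
      rw [interior_Icc] at hx
      rw [(hd_N1 x).deriv]
      have hsx := Real.sin_nonneg_of_nonneg_of_le_pi hx.1.le hx.2.le
      have := g1_nonneg x ⟨hx.1.le, hx.2.le⟩
      positivity
  have h0 : (0:ℝ) ∈ Icc (0:ℝ) π := ⟨le_refl _, Real.pi_pos.le⟩
  have := hmono h0 hy hy.1
  simp only [N1] at this ⊢
  simpa using this

private lemma N_nonneg : ∀ y ∈ Icc (0:ℝ) π,
    0 ≤ y^2 + y * Real.sin y * Real.cos y - 2 * Real.sin y ^ 2 := by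
  intro y hy
  have hmono : MonotoneOn (fun y => y^2 + y * Real.sin y * Real.cos y - 2 * Real.sin y ^ 2)
      (Icc (0:ℝ) π) := by
    apply monotoneOn_of_deriv_nonneg (convex_Icc _ _)
    · exact fun x _ => (hd_N x).continuousAt.continuousWithinAt
    · intro x hx; exact (hd_N x).differentiableAt.differentiableWithinAt
    · intro x hx
      rw [interior_Icc] at hx
      rw [(hd_N x).deriv]
      exact N1_nonneg x ⟨hx.1.le, hx.2.le⟩
  have h0 : (0:ℝ) ∈ Icc (0:ℝ) π := ⟨le_refl _, Real.pi_pos.le⟩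
  have := hmono h0 hy hy.1
  simpa using this

/-- The function t ↦ √(1-t²)/arccos(t) is concave on (-1,1). -/
noncomputable def F1 (t : ℝ) : ℝ :=
  (Real.sqrt (1 - t^2) - t * Real.arccos t) / (Real.sqrt (1 - t^2) * Real.arccos t ^ 2)

private lemma hd_sqrt {t : ℝ} (ht1 : 0 < 1 - t^2) :
    HasDerivAt (fun t => Real.sqrt (1 - t^2)) (-t / Real.sqrt (1 - t^2)) t := by
  have h0 : HasDerivAt (fun t : ℝ => 1 - t^2) (-(2 * t ^ 1 * 1)) t :=
    ((hasDerivAt_id t).pow 2).const_sub 1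
  have h := h0.sqrt (ne_of_gt ht1)
  refine h.congr_deriv ?_
  symm
  have hs : Real.sqrt (1 - t^2) ≠ 0 := (Real.sqrt_pos.mpr ht1).ne'
  field_simp

private lemma hd_F {t : ℝ} (ht : t ∈ Set.Ioo (-1:ℝ) 1) :
    HasDerivAt (fun t : ℝ => Real.sqrt (1 - t ^ 2) / Real.arccos t) (F1 t) t := by
  have ht1 : 0 < 1 - t^2 := by nlinarith [ht.1, ht.2]
  have hs : 0 < Real.sqrt (1 - t^2) := Real.sqrt_pos.mpr ht1
  have ha : 0 < Real.arccos t := Real.arccos_pos.mpr ht.2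
  have hda : HasDerivAt Real.arccos (-(1 / Real.sqrt (1 - t^2))) t :=
    Real.hasDerivAt_arccos (by intro h; rw [h] at ht; exact absurd ht.1 (by norm_num))
      (by intro h; rw [h] at ht; exact absurd ht.2 (by norm_num))
  have h := (hd_sqrt ht1).div hda (ne_of_gt ha)
  refine h.congr_deriv ?_
  symm
  unfold F1
  field_simp
  ring

private lemma hd_F1 {t : ℝ} (ht : t ∈ Set.Ioo (-1:ℝ) 1) :
    HasDerivAt F1
      ((-Real.arccos t * (Real.sqrt (1 - t^2) * Real.arccos t ^ 2)
        - (Real.sqrt (1 - t^2) - t * Real.arccos t)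
          * (-t / Real.sqrt (1 - t^2) * Real.arccos t ^ 2
             + Real.sqrt (1 - t^2) * (2 * Real.arccos t ^ 1 * (-(1 / Real.sqrt (1 - t^2))))))
       / (Real.sqrt (1 - t^2) * Real.arccos t ^ 2) ^ 2) t := by
  have ht1 : 0 < 1 - t^2 := by nlinarith [ht.1, ht.2]
  have hs : 0 < Real.sqrt (1 - t^2) := Real.sqrt_pos.mpr ht1
  have ha : 0 < Real.arccos t := Real.arccos_pos.mpr ht.2
  have hda : HasDerivAt Real.arccos (-(1 / Real.sqrt (1 - t^2))) t :=
    Real.hasDerivAt_arccos (by intro h; rw [h] at ht; exact absurd ht.1 (by norm_num))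
      (by intro h; rw [h] at ht; exact absurd ht.2 (by norm_num))
  have hdP : HasDerivAt (fun t : ℝ => Real.sqrt (1 - t^2) - t * Real.arccos t)
      (-Real.arccos t) t := by
    have h := (hd_sqrt ht1).sub ((hasDerivAt_id t).mul hda)
    have hs2 : Real.sqrt (1 - t^2) ^ 2 = 1 - t^2 := Real.sq_sqrt ht1.le
    refine h.congr_deriv ?_
    symm
    simp only [id_eq]
    field_simp
    linear_combination
  have hdQ : HasDerivAt (fun t : ℝ => Real.sqrt (1 - t^2) * Real.arccos t ^ 2)
      (-t / Real.sqrt (1 - t^2) * Real.arccos t ^ 2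
        + Real.sqrt (1 - t^2) * (2 * Real.arccos t ^ 1 * (-(1 / Real.sqrt (1 - t^2))))) t :=
    (hd_sqrt ht1).mul (hda.pow 2)
  exact hdP.div hdQ (by positivity)

noncomputable def F2 (t : ℝ) : ℝ :=
  (-Real.arccos t * (Real.sqrt (1 - t^2) * Real.arccos t ^ 2)
   - (Real.sqrt (1 - t^2) - t * Real.arccos t)
     * (-t / Real.sqrt (1 - t^2) * Real.arccos t ^ 2
        + Real.sqrt (1 - t^2) * (2 * Real.arccos t ^ 1 * (-(1 / Real.sqrt (1 - t^2))))))
  / (Real.sqrt (1 - t^2) * Real.arccos t ^ 2) ^ 2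

private lemma F2_nonpos {t : ℝ} (ht : t ∈ Set.Ioo (-1:ℝ) 1) : F2 t ≤ 0 := by
  have ht1 : 0 < 1 - t^2 := by nlinarith [ht.1, ht.2]
  have hs : 0 < Real.sqrt (1 - t^2) := Real.sqrt_pos.mpr ht1
  have hs2 : Real.sqrt (1 - t^2) ^ 2 = 1 - t^2 := Real.sq_sqrt ht1.le
  have ha : 0 < Real.arccos t := Real.arccos_pos.mpr ht.2
  have hN := N_nonneg (Real.arccos t) ⟨Real.arccos_nonneg t, Real.arccos_le_pi t⟩
  rw [Real.sin_arccos, Real.cos_arccos ht.1.le ht.2.le] at hN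
  unfold F2
  apply div_nonpos_of_nonpos_of_nonneg _ (sq_nonneg _)
  have key : -Real.arccos t * (Real.sqrt (1 - t^2) * Real.arccos t ^ 2)
      - (Real.sqrt (1 - t^2) - t * Real.arccos t)
        * (-t / Real.sqrt (1 - t^2) * Real.arccos t ^ 2
           + Real.sqrt (1 - t^2) * (2 * Real.arccos t ^ 1 * (-(1 / Real.sqrt (1 - t^2)))))
      = (-(Real.arccos t * (Real.arccos t ^ 2 + Real.arccos t * Real.sqrt (1 - t^2) * t
          - 2 * Real.sqrt (1 - t^2) ^ 2))) / Real.sqrt (1 - t^2) := by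
    rw [eq_div_iff hs.ne']
    field_simp
    linear_combination (-Real.arccos t ^ 2) * hs2
  rw [key]
  apply div_nonpos_of_nonpos_of_nonneg _ hs.le
  nlinarith [hN, ha]

/-- The function t ↦ √(1-t²)/arccos(t) is concave on (-1,1). -/
theorem stmt_14 :
    ConcaveOn ℝ (Set.Ioo (-1 : ℝ) 1)
      (fun t : ℝ => Real.sqrt (1 - t ^ 2) / Real.arccos t) := by
  apply concaveOn_of_hasDerivWithinAt2_nonpos (convex_Ioo _ _) (f' := F1) (f'' := F2)
  · apply ContinuousOn.div
    · exact (Real.continuous_sqrt.comp (by continuity)).continuousOn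
    · exact Real.continuous_arccos.continuousOn
    · intro t ht
      exact (Real.arccos_pos.mpr ht.2).ne'
  · intro x hx
    rw [interior_Ioo] at hx ⊢
    exact (hd_F hx).hasDerivWithinAt
  · intro x hx
    rw [interior_Ioo] at hx ⊢
    exact (hd_F1 hx).hasDerivWithinAt
  · intro x hx
    rw [interior_Ioo] at hx
    exact F2_nonpos hx
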